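/- Let K be a differential field of characteristic 0 and A ∈ K[∂], H ∈ K(∂). Then sdeg(A + H) = sdeg(H), where sdeg is the minimal degree of a right denominator. -/

import Mathlib

/-- A differential field: a field equipped with a derivation. -/
structure DiffField (K : Type*) [Field K] where
  d : K → K
  d_add : ∀ a b : K, d (a + b) = d a + d b
  d_mul : ∀ a b : K, d (a * b) = d a * b + a * d b

namespace DiffField

variable {K : Type*} [Field K] (dk : DiffField K)

theorem d_zero : dk.d 0 = 0 := by
  have h := dk.d_add 0 0
  rw [add_zero] at h
  exact (left_eq_add.mp h)

theorem d_one : dk.d 1 = 0 := by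
  have h := dk.d_mul 1 1
  simp only [mul_one, one_mul] at h
  exact (left_eq_add.mp h)

/-- The subfield of constants of a differential field. -/
def constants : Subfield K where
  carrier := {x | dk.d x = 0}
  zero_mem' := dk.d_zero
  one_mem' := dk.d_one
  add_mem' := by
    intro a b ha hb
    simp only [Set.mem_setOf_eq] at *
    rw [dk.d_add, ha, hb, add_zero]
  neg_mem' := by
    intro a ha
    simp only [Set.mem_setOf_eq] at *
    have h := dk.d_add a (-a)
    rw [add_neg_cancel, dk.d_zero, ha, zero_add] at h
    exact h.symm
  mul_mem' := by
    intro a b ha hb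
    simp only [Set.mem_setOf_eq] at *
    rw [dk.d_mul, ha, hb, zero_mul, mul_zero, add_zero]
  inv_mem' := by
    intro a ha
    simp only [Set.mem_setOf_eq] at *
    by_cases h : a = 0
    · rw [h, inv_zero]; exact dk.d_zero
    · have hm := dk.d_mul a a⁻¹
      rw [mul_inv_cancel₀ h, dk.d_one, ha, zero_mul, zero_add] at hm
      exact (mul_eq_zero.mp hm.symm).resolve_left h

end DiffField

/-- The ring of differential operators `K[∂]`, axiomatized: a ring `R` together with
an embedding `C : K → R` of the coefficient field, a distinguished element `X`
playing the role of `∂` and satisfying `∂ ∘ f = f ∘ ∂ + f'`, such that every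
element of `R` is, in a unique way, a "polynomial" `∑ᵢ C aᵢ * Xⁱ`
(uniqueness being encoded via the coefficient function `coeff`). -/
structure DiffOpRing (K : Type*) [Field K] (dk : DiffField K)
    (R : Type*) [Ring R] where
  C : K →+* R
  X : R
  C_inj : Function.Injective C
  comm : ∀ f : K, X * C f = C f * X + C (dk.d f)
  coeff : R → ℕ → K
  coeff_add : ∀ a b i, coeff (a + b) i = coeff a i + coeff b i
  coeff_fin : ∀ a : R, ∃ n, ∀ m, n ≤ m → coeff a m = 0
  repr_eq : ∀ (a : R) (n : ℕ), (∀ m, n ≤ m → coeff a m = 0) →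
      a = ∑ i ∈ Finset.range n, C (coeff a i) * X ^ i
  coeff_C_mul_X_pow : ∀ (f : K) (i j : ℕ),
      coeff (C f * X ^ i) j = if i = j then f else 0

namespace DiffOpRing

variable {K : Type*} [Field K] {dk : DiffField K} {R : Type*} [Ring R]

/-- The degree (order) of a differential operator; `deg 0 = 0` by convention. -/
noncomputable def deg (dop : DiffOpRing K dk R) (a : R) : ℕ :=
  sSup {n | dop.coeff a n ≠ 0}

/-- `M` is a right least common multiple of `A` and `B`: it generates the
intersection of the principal right ideals generated by `A` and `B`. -/
def IsRightLcm (dop : DiffOpRing K dk R) (M A B : R) : Prop :=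
  ∀ x : R, ((∃ p, x = A * p) ∧ (∃ q, x = B * q)) ↔ ∃ r, x = M * r

/-- `A` and `B` are left coprime: they have no common non-unit left divisor. -/
def LeftCoprime (dop : DiffOpRing K dk R) (A B : R) : Prop :=
  ∀ Q A' B' : R, A = Q * A' → B = Q * B' → IsUnit Q

/-- `A` and `B` are right coprime: they have no common non-unit right divisor. -/
def RightCoprime (dop : DiffOpRing K dk R) (A B : R) : Prop :=
  ∀ A' B' E : R, A = A' * E → B = B' * E → IsUnit E

/-- `Q` is a left greatest common divisor of `A` and `B`. -/
def IsLeftGcd (dop : DiffOpRing K dk R) (Q A B : R) : Prop :=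
  (∃ A', A = Q * A') ∧ (∃ B', B = Q * B') ∧
    ∀ D : R, (∃ A'', A = D * A'') → (∃ B'', B = D * B'') → ∃ E, Q = D * E

end DiffOpRing

/-- The singular degree of an element `H` of the skewfield of fractions `F` of the
differential operator ring `R` (with embedding `j : R →+* F`): the minimal degree
of a denominator `B` in a right fractional decomposition `H = A * B⁻¹`. -/
noncomputable def sdeg {K : Type*} [Field K] {dk : DiffField K} {R : Type*} [Ring R]
    {F : Type*} [DivisionRing F] (dop : DiffOpRing K dk R) (j : R →+* F) (H : F) : ℕ :=
  sInf {n | ∃ A B : R, B ≠ 0 ∧ dop.deg B = n ∧ H = j A * (j B)⁻¹}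

/-- Adding a differential operator does not change the singular degree:
`sdeg (A + H) = sdeg H`. -/
theorem sdeg_add_operator {K : Type*} [Field K] [CharZero K] (dk : DiffField K)
    {R : Type*} [Ring R] (dop : DiffOpRing K dk R)
    {F : Type*} [DivisionRing F] (j : R →+* F) (hj : Function.Injective j)
    (hfrac : ∀ H : F, ∃ A B : R, B ≠ 0 ∧ H = j A * (j B)⁻¹) :
    ∀ (A : R) (H : F), sdeg dop j (j A + H) = sdeg dop j H := by
  have key : ∀ (A : R) (H : F) (n : ℕ),
      (∃ A' B : R, B ≠ 0 ∧ dop.deg B = n ∧ H = j A' * (j B)⁻¹) →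
      (∃ A' B : R, B ≠ 0 ∧ dop.deg B = n ∧ j A + H = j A' * (j B)⁻¹) := by
    rintro A H n ⟨A', B, hB, hdeg, hH⟩
    refine ⟨A * B + A', B, hB, hdeg, ?_⟩
    have hjB : (j B : F) ≠ 0 := fun h => hB (hj (by simpa using h))
    rw [hH, map_add, map_mul, add_mul, mul_assoc, mul_inv_cancel₀ hjB, mul_one]
  intro A H
  unfold sdeg
  congr 1
  ext n
  constructor
  · intro h
    have := key (-A) (j A + H) n h
    simpa using this
  · exact key A H n
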